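/- Let P be a probability measure on ℝ^d, let X₁,…,X_N be i.i.d. with law P, let k : ℝ^d → [0,∞) be an integrable kernel, and let f_a be a strictly positive probability density on ℝ^d. Define ĝ(z) = (1/N)·Σ_{i=1}^N k(z − X_i) and g(z) = E[ĝ(z)] = ∫ k(z − x) dP(x). Then ( E[ ∫ |ĝ(z) − g(z)| dz ] )² ≤ (1/N)·∫ Var[k(z − X₁)] / f_a(z) dz. -/

import Mathlib

open MeasureTheory ProbabilityTheory

lemma stepA {Ω : Type*} [MeasurableSpace Ω] (μ : Measure Ω) [IsProbabilityMeasure μ]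
    {E : Type*} [MeasurableSpace E] (P : Measure E) [IsProbabilityMeasure P]
    {N : ℕ} (hN : 1 ≤ N)
    (X : Fin N → Ω → E) (hmeas : ∀ i, Measurable (X i))
    (hindep : iIndepFun X μ)
    (hlaw : ∀ i, Measure.map (X i) μ = P)
    (φ : E → ℝ) (hφ : Measurable φ) (hφ2 : Integrable (fun x => φ x ^ 2) P) :
    ∫ ω, |(1 / (N:ℝ)) * (∑ i : Fin N, φ (X i ω)) - ∫ x, φ x ∂P| ∂μ
      ≤ Real.sqrt ((∫ x, (φ x - ∫ x', φ x' ∂P) ^ 2 ∂P) / N) := by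
  have hNpos : (0:ℝ) < N := by exact_mod_cast hN
  set m := ∫ x, φ x ∂P with hm
  set V := ∫ x, (φ x - m) ^ 2 ∂P with hV
  have hφP : MemLp φ 2 P := (memLp_two_iff_integrable_sq hφ.aestronglyMeasurable).2 hφ2
  have hY : ∀ i, MemLp (fun ω => φ (X i ω)) 2 μ := fun i => by
    have h1 : MemLp φ 2 (Measure.map (X i) μ) := by rw [hlaw i]; exact hφP
    exact (memLp_map_measure_iff hφ.aestronglyMeasurable (hmeas i).aemeasurable).1 h1
  have hYint : ∀ i, Integrable (fun ω => φ (X i ω)) μ := fun i => (hY i).integrable one_le_two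
  have hEY : ∀ i, ∫ ω, φ (X i ω) ∂μ = m := fun i => by
    rw [hm, ← hlaw i, integral_map (hmeas i).aemeasurable hφ.aestronglyMeasurable]
  set F : Ω → ℝ := fun ω => (1/(N:ℝ)) * ∑ i : Fin N, φ (X i ω) with hF
  have hsum_eq : (∑ i : Fin N, fun ω => φ (X i ω)) = fun ω => ∑ i : Fin N, φ (X i ω) := by
    ext ω; simp
  have hFsum : MemLp (fun ω => ∑ i : Fin N, φ (X i ω)) 2 μ := by
    rw [← hsum_eq]; exact memLp_finset_sum' _ (fun i _ => hY i)
  have hF2 : MemLp F 2 μ := hFsum.const_mul _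
  have hEF : ∫ ω, F ω ∂μ = m := by
    rw [hF]
    rw [integral_const_mul]
    rw [integral_finset_sum _ (fun i _ => hYint i)]
    simp only [hEY]
    simp
    field_simp
  set S : Ω → ℝ := fun ω => F ω - m with hS
  have hS2 : MemLp S 2 μ := hF2.sub (memLp_const m)
  -- Cauchy-Schwarz: E|S| ≤ sqrt (E S²)
  have hCS : ∫ ω, |S ω| ∂μ ≤ Real.sqrt (∫ ω, S ω ^ 2 ∂μ) := by
    have hpq : (2:ℝ).HolderConjugate 2 := Real.HolderConjugate.two_two
    have h2 : ENNReal.ofReal (2:ℝ) = 2 := by simp [ENNReal.ofReal_ofNat]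
    have habs : MemLp (fun ω => |S ω|) (ENNReal.ofReal (2:ℝ)) μ := by
      rw [h2]; simpa [Real.norm_eq_abs] using hS2.norm
    have hone : MemLp (fun _ : Ω => (1:ℝ)) (ENNReal.ofReal (2:ℝ)) μ := by
      rw [h2]; exact memLp_const 1
    have := integral_mul_le_Lp_mul_Lq_of_nonneg hpq
      (Filter.Eventually.of_forall (fun ω => abs_nonneg (S ω)))
      (Filter.Eventually.of_forall (fun _ => zero_le_one)) habs hone
    have h1 : ∫ ω, |S ω| * 1 ∂μ = ∫ ω, |S ω| ∂μ := by simp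
    have h2' : (∫ ω, |S ω| ^ (2:ℝ) ∂μ) = ∫ ω, S ω ^ 2 ∂μ := by
      refine integral_congr_ae (Filter.Eventually.of_forall fun ω => ?_)
      show |S ω| ^ (2:ℝ) = S ω ^ 2
      rw [show ((2:ℝ)) = ((2:ℕ):ℝ) by norm_num, Real.rpow_natCast, sq_abs]
    have h3 : (∫ _ : Ω, (1:ℝ) ^ (2:ℝ) ∂μ) = 1 := by simp
    rw [h1, h2', h3, Real.one_rpow, mul_one] at this
    rw [Real.sqrt_eq_rpow]
    exact this
  -- E S² = variance F
  have hvarF : ∫ ω, S ω ^ 2 ∂μ = variance F μ := by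
    rw [variance_eq_integral hF2.aemeasurable, hEF]
  -- variance of each Y i
  have hvarY : ∀ i : Fin N, variance (fun ω => φ (X i ω)) μ = V := fun i => by
    rw [variance_eq_integral (hY i).aemeasurable]
    have hmap : ∫ x, (φ x - m) ^ 2 ∂(Measure.map (X i) μ) = ∫ ω, (φ (X i ω) - m) ^ 2 ∂μ :=
      integral_map (hmeas i).aemeasurable
        (((hφ.sub measurable_const).pow_const 2).aestronglyMeasurable)
    rw [hV, ← hlaw i, hmap]
    refine integral_congr_ae (Filter.Eventually.of_forall fun ω => ?_)
    simp only [Pi.pow_apply, Pi.sub_apply, hEY i]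
  -- variance of F
  have hvar : variance F μ = V / N := by
    have h1 : variance F μ = (1/(N:ℝ))^2 * variance (fun ω => ∑ i : Fin N, φ (X i ω)) μ :=
      variance_const_mul _ _ _
    have h2 : variance (fun ω => ∑ i : Fin N, φ (X i ω)) μ = (N:ℝ) * V := by
      rw [← hsum_eq, IndepFun.variance_sum (fun i _ => hY i)
        (fun i _ j _ hij => (hindep.indepFun hij).comp hφ hφ)]
      simp [hvarY]
    rw [h1, h2]; field_simp
  calc ∫ ω, |(1 / (N:ℝ)) * (∑ i : Fin N, φ (X i ω)) - m| ∂μ = ∫ ω, |S ω| ∂μ := rfl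
    _ ≤ Real.sqrt (∫ ω, S ω ^ 2 ∂μ) := hCS
    _ = Real.sqrt (V / N) := by rw [hvarF, hvar]

/-- (Importance sampling + Cauchy–Schwarz bound on the `L¹` deviation of
a kernel density estimator.) Let `X₁,…,X_N` be i.i.d. with law `P` on `ℝ^d`, let
`k : ℝ^d → [0,∞)` be an integrable kernel, and let `f_a` be a strictly positive probability
density on `ℝ^d`. With `ĝ(z) = (1/N)·Σᵢ k(z − Xᵢ)` and `g(z) = E[ĝ(z)] = ∫ k(z−x) dP(x)`,
`( E[ ∫ |ĝ(z) − g(z)| dz ] )² ≤ (1/N)·∫ Var[k(z − X₁)] / f_a(z) dz`,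
where `Var[k(z − X₁)] = ∫ (k(z−x) − ∫ k(z−x') dP(x'))² dP(x)`. -/
theorem kde_L1_deviation_importance_sampling_bound
    {d : ℕ} (P : Measure (EuclideanSpace ℝ (Fin d))) [IsProbabilityMeasure P]
    (N : ℕ) (hN : 1 ≤ N)
    {Ω : Type*} [MeasurableSpace Ω] (μ : Measure Ω) [IsProbabilityMeasure μ]
    (X : Fin N → Ω → EuclideanSpace ℝ (Fin d))
    (hmeas : ∀ i, Measurable (X i))
    (hindep : iIndepFun X μ)
    (hlaw : ∀ i, Measure.map (X i) μ = P)
    (k : EuclideanSpace ℝ (Fin d) → ℝ)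
    (hk0 : ∀ z, 0 ≤ k z) (hkmeas : Measurable k) (hkint : Integrable k volume)
    (hksq : ∀ z, Integrable (fun x => (k (z - x)) ^ 2) P)
    (fa : EuclideanSpace ℝ (Fin d) → ℝ)
    (hfa0 : ∀ z, 0 < fa z) (hfameas : Measurable fa) (hfaint : ∫ z, fa z = 1)
    (hvarint : Integrable
      (fun z => (∫ x, (k (z - x) - ∫ x', k (z - x') ∂P) ^ 2 ∂P) / fa z) volume) :
    (∫ ω, (∫ z, |(1 / (N : ℝ)) * (∑ i : Fin N, k (z - X i ω))
            - ∫ x, k (z - x) ∂P| ∂volume) ∂μ) ^ 2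
      ≤ (1 / (N : ℝ)) *
          ∫ z, (∫ x, (k (z - x) - ∫ x', k (z - x') ∂P) ^ 2 ∂P) / fa z := by
  have hNpos : (0:ℝ) < N := by exact_mod_cast hN
  set g : EuclideanSpace ℝ (Fin d) → ℝ := fun z => ∫ x, k (z - x) ∂P with hgdef
  set V : EuclideanSpace ℝ (Fin d) → ℝ := fun z => ∫ x, (k (z - x) - g z) ^ 2 ∂P with hVdef
  show (∫ ω, (∫ z, |(1 / (N : ℝ)) * (∑ i : Fin N, k (z - X i ω)) - g z| ∂volume) ∂μ) ^ 2
      ≤ (1 / (N : ℝ)) * ∫ z, V z / fa z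
  -- measurability facts
  have hsub : Measurable fun p : (EuclideanSpace ℝ (Fin d)) × (EuclideanSpace ℝ (Fin d)) =>
      k (p.1 - p.2) := hkmeas.comp (measurable_fst.sub measurable_snd)
  have hgmeas : Measurable g := hsub.stronglyMeasurable.integral_prod_right'.measurable
  have hVmeas : Measurable V := by
    have h1 : Measurable fun p : (EuclideanSpace ℝ (Fin d)) × (EuclideanSpace ℝ (Fin d)) =>
        (k (p.1 - p.2) - g p.1) ^ 2 :=
      (hsub.sub (hgmeas.comp measurable_fst)).pow_const 2
    exact h1.stronglyMeasurable.integral_prod_right'.measurable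
  have hV0 : ∀ z, 0 ≤ V z := fun z => integral_nonneg fun x => sq_nonneg _
  have hφm : ∀ z, Measurable (fun x => k (z - x)) :=
    fun z => hkmeas.comp (measurable_const.sub measurable_id)
  -- fa is integrable
  have hfab : Integrable fa volume := by
    by_contra h
    rw [integral_undef h] at hfaint
    norm_num at hfaint
  -- the weight function W
  set W : EuclideanSpace ℝ (Fin d) → ℝ := fun z => (1/(N:ℝ)) * (V z / fa z) with hWdef
  have hW0 : ∀ z, 0 ≤ W z := fun z =>
    mul_nonneg (by positivity) (div_nonneg (hV0 z) (hfa0 z).le)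
  have hWint : Integrable W volume := hvarint.const_mul _
  have hWmeas : Measurable W := (measurable_const.mul (hVmeas.div hfameas))
  set R : ℝ := ∫ z, W z with hRdef
  have hR : R = (1 / (N : ℝ)) * ∫ z, V z / fa z := by
    rw [hRdef, hWdef, integral_const_mul]
  have hR0 : 0 ≤ R := integral_nonneg hW0
  -- integrability in ω for fixed z
  have hYint : ∀ z (i : Fin N), Integrable (fun ω => k (z - X i ω)) μ := fun z i => by
    have h1 : Integrable (fun x => k (z - x)) P :=
      ((memLp_two_iff_integrable_sq (hφm z).aestronglyMeasurable).2 (hksq z)).integrable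
        one_le_two
    rw [← hlaw i] at h1
    exact (integrable_map_measure (hφm z).aestronglyMeasurable (hmeas i).aemeasurable).1 h1
  have hΔint : ∀ z, Integrable
      (fun ω => |(1 / (N : ℝ)) * (∑ i : Fin N, k (z - X i ω)) - g z|) μ := fun z =>
    (((integrable_finset_sum _ (fun i _ => hYint z i)).const_mul _).sub (integrable_const _)).abs
  -- joint measurability of the deviation
  have hΔjoint : Measurable (fun p : Ω × EuclideanSpace ℝ (Fin d) =>
      |(1 / (N : ℝ)) * (∑ i : Fin N, k (p.2 - X i p.1)) - g p.2|) := by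
    apply Measurable.abs
    apply Measurable.sub
    · exact (Finset.measurable_sum _ fun i _ =>
        hkmeas.comp (measurable_snd.sub ((hmeas i).comp measurable_fst))).const_mul _
    · exact hgmeas.comp measurable_snd
  -- step A applied pointwise in z
  have hAz : ∀ z, ∫ ω, |(1 / (N : ℝ)) * (∑ i : Fin N, k (z - X i ω)) - g z| ∂μ
      ≤ Real.sqrt (V z / N) := fun z =>
    stepA μ P hN X hmeas hindep hlaw (fun x => k (z - x)) (hφm z) (hksq z)
  -- outer integrand
  set A : Ω → ℝ := fun ω => ∫ z, |(1 / (N : ℝ)) * (∑ i : Fin N, k (z - X i ω)) - g z| ∂volume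
    with hAdef
  have hAmeas : Measurable A := hΔjoint.stronglyMeasurable.integral_prod_right'.measurable
  have hA0 : ∀ ω, 0 ≤ A ω := fun ω => integral_nonneg fun z => abs_nonneg _
  have hAeq : ∀ ω, A ω = (∫⁻ z, ENNReal.ofReal
      (|(1 / (N : ℝ)) * (∑ i : Fin N, k (z - X i ω)) - g z|) ∂volume).toReal := fun ω =>
    integral_eq_lintegral_of_nonneg_ae (Filter.Eventually.of_forall fun z => abs_nonneg _)
      (hΔjoint.comp measurable_prodMk_left).aestronglyMeasurable
  -- all-ℝ≥0∞ chain
  have hpq : (2:ℝ).HolderConjugate 2 := Real.HolderConjugate.two_two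
  have e1 : ∀ a : ℝ, 0 ≤ a → ENNReal.ofReal (Real.sqrt a) ^ (2:ℝ) = ENNReal.ofReal a := by
    intro a ha
    rw [ENNReal.ofReal_rpow_of_nonneg (Real.sqrt_nonneg a) (by norm_num : (0:ℝ) ≤ 2)]
    congr 1
    rw [show ((2:ℝ)) = ((2:ℕ):ℝ) by norm_num, Real.rpow_natCast, Real.sq_sqrt ha]
  have hchain : ∫⁻ ω, ENNReal.ofReal (A ω) ∂μ ≤ ENNReal.ofReal (Real.sqrt R) := by
    calc ∫⁻ ω, ENNReal.ofReal (A ω) ∂μ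
        ≤ ∫⁻ ω, ∫⁻ z, ENNReal.ofReal
            (|(1 / (N : ℝ)) * (∑ i : Fin N, k (z - X i ω)) - g z|) ∂volume ∂μ := by
          refine lintegral_mono fun ω => ?_
          rw [hAeq ω]
          exact ENNReal.ofReal_toReal_le
      _ = ∫⁻ z, ∫⁻ ω, ENNReal.ofReal
            (|(1 / (N : ℝ)) * (∑ i : Fin N, k (z - X i ω)) - g z|) ∂μ ∂volume :=
          lintegral_lintegral_swap (ENNReal.measurable_ofReal.comp hΔjoint).aemeasurable
      _ ≤ ∫⁻ z, ENNReal.ofReal (Real.sqrt (V z / N)) ∂volume := by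
          refine lintegral_mono fun z => ?_
          rw [← ofReal_integral_eq_lintegral_ofReal (hΔint z)
            (Filter.Eventually.of_forall fun ω => abs_nonneg _)]
          exact ENNReal.ofReal_le_ofReal (hAz z)
      _ = ∫⁻ z, ENNReal.ofReal (Real.sqrt (W z)) * ENNReal.ofReal (Real.sqrt (fa z)) ∂volume := by
          refine lintegral_congr fun z => ?_
          rw [← ENNReal.ofReal_mul (Real.sqrt_nonneg _), ← Real.sqrt_mul (hW0 z)]
          congr 2
          simp only [hWdef]
          field_simp [(hfa0 z).ne', hNpos.ne']
      _ ≤ (∫⁻ z, ENNReal.ofReal (Real.sqrt (W z)) ^ (2:ℝ) ∂volume) ^ (1/(2:ℝ)) *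
          (∫⁻ z, ENNReal.ofReal (Real.sqrt (fa z)) ^ (2:ℝ) ∂volume) ^ (1/(2:ℝ)) :=
          ENNReal.lintegral_mul_le_Lp_mul_Lq volume hpq
            (ENNReal.measurable_ofReal.comp hWmeas.sqrt).aemeasurable
            (ENNReal.measurable_ofReal.comp hfameas.sqrt).aemeasurable
      _ = (ENNReal.ofReal R) ^ (1/(2:ℝ)) * (ENNReal.ofReal 1) ^ (1/(2:ℝ)) := by
          congr 1
          · congr 1
            rw [lintegral_congr fun z => e1 _ (hW0 z),
              ← ofReal_integral_eq_lintegral_ofReal hWint (Filter.Eventually.of_forall hW0),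
              hRdef]
          · congr 1
            rw [lintegral_congr fun z => e1 _ (hfa0 z).le,
              ← ofReal_integral_eq_lintegral_ofReal hfab
                (Filter.Eventually.of_forall fun z => (hfa0 z).le), hfaint]
      _ = ENNReal.ofReal (Real.sqrt R) := by
          rw [ENNReal.ofReal_one, ENNReal.one_rpow, mul_one,
            ENNReal.ofReal_rpow_of_nonneg hR0 (by norm_num : (0:ℝ) ≤ 1/2),
            Real.sqrt_eq_rpow]
  -- conclude
  have hLeq : (∫ ω, A ω ∂μ) = (∫⁻ ω, ENNReal.ofReal (A ω) ∂μ).toReal :=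
    integral_eq_lintegral_of_nonneg_ae (Filter.Eventually.of_forall hA0)
      hAmeas.aestronglyMeasurable
  have hLle : (∫ ω, A ω ∂μ) ≤ Real.sqrt R := by
    rw [hLeq]
    calc (∫⁻ ω, ENNReal.ofReal (A ω) ∂μ).toReal
        ≤ (ENNReal.ofReal (Real.sqrt R)).toReal :=
          ENNReal.toReal_mono ENNReal.ofReal_ne_top hchain
      _ = Real.sqrt R := ENNReal.toReal_ofReal (Real.sqrt_nonneg _)
  have hL0 : 0 ≤ ∫ ω, A ω ∂μ := integral_nonneg hA0
  calc (∫ ω, A ω ∂μ) ^ 2 ≤ (Real.sqrt R) ^ 2 := pow_le_pow_left₀ hL0 hLle 2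
    _ = R := Real.sq_sqrt hR0
    _ = (1 / (N : ℝ)) * ∫ z, V z / fa z := hR
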